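/- Let M ∈ ℝ^{n×n} be row-stochastic such that the graph G(M) is aperiodic and has a globally reachable node. Let Q be the n×n matrix with rows (Q_{i,i}, Q_{i,i+1}) = (-1, 1) for i = 1,…,n-1 and last row (1/n,…,1/n). Then Q is invertible and Q M Q^{-1} has block lower-triangular form [[M_red, 0],[cᵀ, 1]] for some M_red ∈ ℝ^{(n-1)×(n-1)} with spectral radius strictly less than 1. -/

import Mathlib

open Matrix

/-- The pairwise-difference transform matrix `Q`: rows `i < n-1` are `e_{i+1} - e_i`,
and the last row is `(1/n, …, 1/n)`. -/
noncomputable def pairDiffQ (m : ℕ) : Matrix (Fin (m + 1)) (Fin (m + 1)) ℝ :=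
  Matrix.of fun i j =>
    if (i : ℕ) = m then ((m : ℝ) + 1)⁻¹
    else if j = i then -1
    else if (j : ℕ) = (i : ℕ) + 1 then 1
    else 0

lemma pairDiffQ_row (m : ℕ) (i : Fin (m+1)) (hi : (i:ℕ) ≠ m) (u : Fin (m+1) → ℝ) :
    (pairDiffQ m *ᵥ u) i = u ⟨(i:ℕ)+1, by omega⟩ - u i := by
  have hi' : ((i:ℕ)) < m := by omega
  set i' : Fin (m+1) := ⟨(i:ℕ)+1, by omega⟩ with hdef
  have hne : i ≠ i' := by
    intro h; apply absurd (congrArg Fin.val h); simp [i']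
  have : ∀ j, pairDiffQ m i j * u j
      = (if j = i then -u i else 0) + (if j = i' then u i' else 0) := by
    intro j
    simp only [pairDiffQ, of_apply, hi, if_neg hi]
    by_cases h1 : j = i
    · subst h1; simp [hne, i']
    · by_cases h2 : j = i'
      · subst h2; simp [if_neg h1, i', Ne.symm hne]
      · have : ((j:ℕ)) ≠ (i:ℕ)+1 := by
          intro hc; apply h2; apply Fin.ext; simpa [i'] using hc
        simp [h1, this, h2]
  simp only [mulVec, dotProduct, this, Finset.sum_add_distrib, Finset.sum_ite_eq', Finset.mem_univ,
    if_true]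
  ring

lemma pairDiffQ_last (m : ℕ) (u : Fin (m+1) → ℝ) :
    (pairDiffQ m *ᵥ u) (Fin.last m) = ((m:ℝ)+1)⁻¹ * ∑ j, u j := by
  simp [pairDiffQ, mulVec, dotProduct, Finset.mul_sum]

lemma pairDiffQ_ones (m : ℕ) :
    pairDiffQ m *ᵥ (fun _ => (1:ℝ)) = Pi.single (Fin.last m) 1 := by
  have hm : ((m:ℝ)+1) ≠ 0 := by positivity
  funext i
  by_cases hi : (i:ℕ) = m
  · have : i = Fin.last m := Fin.ext hi
    subst this
    rw [pairDiffQ_last]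
    simp [Finset.card_univ, hm]
  · rw [pairDiffQ_row m i hi]
    have : i ≠ Fin.last m := fun h => hi (by simp [h])
    simp [Pi.single_eq_of_ne this]

lemma const_of_rows (m : ℕ) (u : Fin (m+1) → ℝ)
    (h : ∀ i : Fin (m+1), (hi : (i:ℕ) ≠ m) → u ⟨(i:ℕ)+1, by omega⟩ = u i) :
    ∀ i, u i = u 0 := by
  intro i
  obtain ⟨k, hk⟩ := i
  induction k with
  | zero => rfl
  | succ n ih =>
    have hn : n < m + 1 := by omega
    have := h ⟨n, hn⟩ (by simpa using by omega)
    rw [show (⟨n+1, hk⟩ : Fin (m+1)) = ⟨(n:ℕ)+1, by omega⟩ from rfl, this, ih hn]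

lemma pairDiffQ_det_ne (m : ℕ) : (pairDiffQ m).det ≠ 0 := by
  intro hdet
  obtain ⟨u, hu, h0⟩ := (Matrix.exists_mulVec_eq_zero_iff).2 hdet
  have hconst : ∀ i, u i = u 0 := by
    apply const_of_rows
    intro i hi
    have := congrFun h0 i
    rw [pairDiffQ_row m i hi] at this
    have : u ⟨(i:ℕ)+1, by omega⟩ - u i = 0 := this
    linarith
  have hlast := congrFun h0 (Fin.last m)
  rw [pairDiffQ_last] at hlast
  have hm : ((m:ℝ)+1) ≠ 0 := by positivity
  have hsum : ∑ j, u j = ((m:ℝ)+1) * u 0 := by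
    rw [Finset.sum_congr rfl fun j _ => hconst j]
    simp [Finset.card_univ]
  rw [hsum] at hlast
  have : u 0 = 0 := by
    field_simp at hlast
    tauto
  apply hu
  funext i; rw [hconst i, this]; rfl

section
variable (m : ℕ) (M : Matrix (Fin (m + 1)) (Fin (m + 1)) ℝ)

lemma lastcol (hM1 : ∀ i, ∑ j, M i j = 1) (i : Fin (m+1)) :
    (pairDiffQ m * M * (pairDiffQ m)⁻¹) i (Fin.last m)
      = if i = Fin.last m then (1:ℝ) else 0 := by
  have hdet : IsUnit (pairDiffQ m).det := isUnit_iff_ne_zero.2 (pairDiffQ_det_ne m)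
  have hinv : (pairDiffQ m)⁻¹ *ᵥ Pi.single (Fin.last m) 1 = fun _ => (1:ℝ) := by
    rw [← pairDiffQ_ones m, mulVec_mulVec, nonsing_inv_mul _ hdet, one_mulVec]
  have hMones : M *ᵥ (fun _ => (1:ℝ)) = fun _ => (1:ℝ) := by
    funext i; simp [mulVec, dotProduct, hM1 i]
  have : (pairDiffQ m * M * (pairDiffQ m)⁻¹) *ᵥ Pi.single (Fin.last m) 1
      = Pi.single (Fin.last m) 1 := by
    rw [← mulVec_mulVec, ← mulVec_mulVec, hinv, hMones, pairDiffQ_ones]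
  have h2 := congrFun this i
  rw [mulVec_single] at h2
  simp only [Pi.smul_apply, MulOpposite.op_one, one_smul, Matrix.col_apply] at h2
  rw [h2]
  by_cases h : i = Fin.last m
  · subst h; simp
  · simp [h, Pi.single_eq_of_ne h]

lemma blockform (hM1 : ∀ i, ∑ j, M i j = 1) :
    pairDiffQ m * M * (pairDiffQ m)⁻¹ =
      Matrix.reindex finSumFinEquiv finSumFinEquiv
        (Matrix.fromBlocks
          ((pairDiffQ m * M * (pairDiffQ m)⁻¹).submatrix Fin.castSucc Fin.castSucc)
          0
          (Matrix.of fun _ j => (pairDiffQ m * M * (pairDiffQ m)⁻¹) (Fin.last m) (Fin.castSucc j))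
          1) := by
  funext i j
  rw [Matrix.reindex_apply, Matrix.submatrix_apply]
  induction i using Fin.lastCases with
  | last =>
    induction j using Fin.lastCases with
    | last =>
      rw [show finSumFinEquiv.symm (Fin.last m) = Sum.inr 0 from finSumFinEquiv_symm_last]
      simp [lastcol m M hM1, Matrix.one_apply]
    | cast j =>
      rw [show finSumFinEquiv.symm (Fin.last m) = Sum.inr 0 from finSumFinEquiv_symm_last,
        show finSumFinEquiv.symm (Fin.castSucc j) = Sum.inl j from
          finSumFinEquiv_symm_apply_castAdd j]
      simp
  | cast i =>
    rw [show finSumFinEquiv.symm (Fin.castSucc i) = Sum.inl i from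
      finSumFinEquiv_symm_apply_castAdd i]
    induction j using Fin.lastCases with
    | last =>
      rw [show finSumFinEquiv.symm (Fin.last m) = Sum.inr 0 from finSumFinEquiv_symm_last]
      have := lastcol m M hM1 (Fin.castSucc i)
      simp only [fromBlocks_apply₁₂]
      rw [this, if_neg (by exact Fin.castSucc_lt_last i |>.ne)]
      rfl
    | cast j =>
      rw [show finSumFinEquiv.symm (Fin.castSucc j) = Sum.inl j from
        finSumFinEquiv_symm_apply_castAdd j]
      simp
end

section
variable {n : ℕ}

lemma stoch_mul (A B : Matrix (Fin n) (Fin n) ℝ)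
    (hA0 : ∀ i j, 0 ≤ A i j) (hA1 : ∀ i, ∑ j, A i j = 1)
    (hB0 : ∀ i j, 0 ≤ B i j) (hB1 : ∀ i, ∑ j, B i j = 1) :
    (∀ i j, 0 ≤ (A*B) i j) ∧ (∀ i, ∑ j, (A*B) i j = 1) := by
  constructor
  · intro i j
    rw [Matrix.mul_apply]
    exact Finset.sum_nonneg fun l _ => mul_nonneg (hA0 i l) (hB0 l j)
  · intro i
    simp only [Matrix.mul_apply]
    rw [Finset.sum_comm]
    calc ∑ l, ∑ j, A i l * B l j = ∑ l, A i l * ∑ j, B l j := by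
          simp [Finset.mul_sum]
      _ = 1 := by simp [hB1, hA1]

lemma stoch_pow (M : Matrix (Fin n) (Fin n) ℝ)
    (hM0 : ∀ i j, 0 ≤ M i j) (hM1 : ∀ i, ∑ j, M i j = 1) (k : ℕ) :
    (∀ i j, 0 ≤ (M^k) i j) ∧ (∀ i, ∑ j, (M^k) i j = 1) := by
  induction k with
  | zero =>
    constructor
    · intro i j; by_cases h : i = j <;> simp [Matrix.one_apply, h]
    · intro i; simp [Matrix.one_apply]
  | succ k ih =>
    rw [pow_succ]
    exact stoch_mul _ _ ih.1 ih.2 hM0 hM1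

/-- norm bound for stochastic matrix acting on a complex vector -/
lemma stoch_bound (A : Matrix (Fin n) (Fin n) ℝ)
    (hA0 : ∀ i j, 0 ≤ A i j) (hA1 : ∀ i, ∑ j, A i j = 1)
    (z : Fin n → ℂ) (C : ℝ) (hC : ∀ j, ‖z j‖ ≤ C) (i : Fin n) :
    ‖((A.map Complex.ofReal) *ᵥ z) i‖ ≤ C := by
  have : ((A.map Complex.ofReal) *ᵥ z) i = ∑ j, (A i j : ℂ) * z j := by
    simp [mulVec, dotProduct, Matrix.map_apply]
  rw [this]
  calc ‖∑ j, (A i j : ℂ) * z j‖ ≤ ∑ j, ‖(A i j : ℂ) * z j‖ := norm_sum_le _ _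
    _ = ∑ j, A i j * ‖z j‖ := by
        refine Finset.sum_congr rfl fun j _ => ?_
        rw [norm_mul, Complex.norm_real, Real.norm_of_nonneg (hA0 i j)]
    _ ≤ ∑ j, A i j * C := Finset.sum_le_sum fun j _ =>
        mul_le_mul_of_nonneg_left (hC j) (hA0 i j)
    _ = C := by rw [← Finset.sum_mul, hA1 i, one_mul]

lemma map_mulVec (A : Matrix (Fin n) (Fin n) ℝ) (x : Fin n → ℝ) :
    (A.map Complex.ofReal) *ᵥ (fun i => (x i : ℂ)) = fun i => ((A *ᵥ x) i : ℂ) := by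
  funext i
  simp [mulVec, dotProduct, Matrix.map_apply]

lemma mapC_pow (A : Matrix (Fin n) (Fin n) ℝ) (k : ℕ) :
    (A^k).map Complex.ofReal = (A.map Complex.ofReal)^k := by
  have : ∀ B : Matrix (Fin n) (Fin n) ℝ, B.map Complex.ofReal
      = Complex.ofRealHom.mapMatrix B := fun _ => rfl
  rw [this, this, map_pow]

lemma eig_pow (N : Matrix (Fin n) (Fin n) ℂ) (μ : ℂ) (u : Fin n → ℂ)
    (h : N *ᵥ u = μ • u) (k : ℕ) : N^k *ᵥ u = μ^k • u := by
  induction k with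
  | zero => simp
  | succ k ih =>
    rw [pow_succ', pow_succ', ← Matrix.mulVec_mulVec, ih, Matrix.mulVec_smul, h,
      smul_smul]
    rw [mul_comm]
end

lemma align (S : ℝ) (z w : ℂ) (hz : ‖z‖ ≤ S) (hw : ‖w‖ = S) (hne : z ≠ w) :
    (z * (starRingEnd ℂ) w).re < S^2 := by
  have h1 : (z * (starRingEnd ℂ) w).re ≤ S^2 := by
    calc (z * (starRingEnd ℂ) w).re ≤ ‖z * (starRingEnd ℂ) w‖ :=
          Complex.re_le_norm _
      _ = ‖z‖ * ‖w‖ := by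
          rw [norm_mul, Complex.norm_conj]
      _ ≤ S * S := by
          have : (0:ℝ) ≤ S := le_trans (norm_nonneg z) hz
          nlinarith [norm_nonneg z]
      _ = S^2 := (sq S).symm
  rcases h1.lt_or_eq with h | h
  · exact h
  · exfalso
    apply hne
    have hsq : Complex.normSq (z - w) ≤ 0 := by
      rw [Complex.normSq_sub]
      have hz2 : Complex.normSq z ≤ S^2 := by
        rw [Complex.normSq_eq_norm_sq]
        nlinarith [norm_nonneg z]
      have hw2 : Complex.normSq w = S^2 := by
        rw [Complex.normSq_eq_norm_sq, hw]
      rw [h, hw2]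
      linarith
    have := Complex.normSq_nonneg (z - w)
    have h0 : Complex.normSq (z - w) = 0 := le_antisymm hsq this
    have := Complex.normSq_eq_zero.mp h0
    exact sub_eq_zero.mp this

lemma key (m : ℕ) (M : Matrix (Fin (m+1)) (Fin (m+1)) ℝ)
    (hM0 : ∀ i j, 0 ≤ M i j) (hM1 : ∀ i, ∑ j, M i j = 1)
    (haper : ∃ j, ∃ k₀, ∀ k ≥ k₀, ∀ i, 0 < (M ^ k) i j)
    (μ : ℂ) (u : Fin (m+1) → ℂ) (hu : u ≠ 0)
    (heig : (M.map Complex.ofReal) *ᵥ u = μ • u) :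
    ‖μ‖ < 1 ∨ (μ = 1 ∧ ∀ i i', u i = u i') := by
  obtain ⟨j, k₀, hpos⟩ := haper
  obtain ⟨i₀, -, hmax⟩ := Finset.exists_max_image Finset.univ (fun i => ‖u i‖) ⟨0, by simp⟩
  simp only [Finset.mem_univ, forall_true_left] at hmax
  set S := ‖u i₀‖ with hSdef
  have hS0 : 0 < S := by
    obtain ⟨i, hi⟩ := Function.ne_iff.mp hu
    exact lt_of_lt_of_le (norm_pos_iff.2 hi) (hmax i)
  have hui₀ : u i₀ ≠ 0 := by
    intro h; rw [hSdef, h] at hS0; simp at hS0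
  have hpowvec : ∀ k, ((M^k).map Complex.ofReal) *ᵥ u = μ^k • u := fun k => by
    rw [mapC_pow]; exact eig_pow _ _ _ heig k
  have hbound : ∀ (k : ℕ) i, ‖(μ^k • u) i‖ ≤ S := fun k i => by
    rw [← hpowvec]
    exact stoch_bound _ (stoch_pow M hM0 hM1 k).1 (stoch_pow M hM0 hM1 k).2 u S hmax i
  have habs1 : ‖μ‖ ≤ 1 := by
    have := hbound 1 i₀
    simp only [pow_one, Pi.smul_apply, smul_eq_mul, norm_mul] at this
    nlinarith
  rcases habs1.lt_or_eq with hlt | hone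
  · left; exact hlt
  right
  have hμ0 : μ ≠ 0 := by
    intro h; rw [h] at hone; simp at hone
  have hsum : ∀ k, ∑ j', ((M^k) i₀ j' : ℂ) * u j' = μ^k * u i₀ := by
    intro k
    have := congrFun (hpowvec k) i₀
    simpa [mulVec, dotProduct, Matrix.map_apply] using this
  have huj : ∀ k ≥ k₀, u j = μ^k * u i₀ := by
    intro k hk
    set w := μ^k * u i₀ with hwdef
    have hwnorm : ‖w‖ = S := by
      rw [hwdef, norm_mul, norm_pow, hone, one_pow, one_mul]
    by_contra hne
    have hjpos := hpos k hk i₀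
    have hSnn := hS0.le
    have hterm_le : ∀ j' : Fin (m+1), (M^k) i₀ j' * (u j' * (starRingEnd ℂ) w).re
        ≤ (M^k) i₀ j' * S^2 := by
      intro j'
      apply mul_le_mul_of_nonneg_left _ ((stoch_pow M hM0 hM1 k).1 i₀ j')
      calc (u j' * (starRingEnd ℂ) w).re ≤ ‖u j' * (starRingEnd ℂ) w‖ :=
            Complex.re_le_norm _
        _ = ‖u j'‖ * ‖w‖ := by
            rw [norm_mul, Complex.norm_conj]
        _ ≤ S * S := by nlinarith [hmax j', norm_nonneg (u j'), hwnorm.le]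
        _ = S^2 := (sq S).symm
    have hterm_lt : (M^k) i₀ j * (u j * (starRingEnd ℂ) w).re < (M^k) i₀ j * S^2 :=
      mul_lt_mul_of_pos_left (align S (u j) w (hmax j) hwnorm hne) hjpos
    have hlhs : ∑ j', (M^k) i₀ j' * (u j' * (starRingEnd ℂ) w).re = S^2 := by
      have : (w * (starRingEnd ℂ) w).re = S^2 := by
        rw [Complex.mul_conj]
        simp [Complex.normSq_eq_norm_sq, hwnorm, sq]
      have hexp : ∑ j', ((M^k) i₀ j' : ℂ) * (u j' * (starRingEnd ℂ) w)
          = w * (starRingEnd ℂ) w := by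
        calc ∑ j', ((M^k) i₀ j' : ℂ) * (u j' * (starRingEnd ℂ) w)
            = ∑ j', (((M^k) i₀ j' : ℂ) * u j') * (starRingEnd ℂ) w :=
              Finset.sum_congr rfl fun _ _ => (mul_assoc _ _ _).symm
          _ = (∑ j', ((M^k) i₀ j' : ℂ) * u j') * (starRingEnd ℂ) w :=
              (Finset.sum_mul _ _ _).symm
          _ = w * (starRingEnd ℂ) w := by rw [hsum k]
      rw [← this, ← hexp, Complex.re_sum]
      exact Finset.sum_congr rfl fun j' _ => by rw [Complex.re_ofReal_mul]
    have hrhs : ∑ j' : Fin (m+1), (M^k) i₀ j' * S^2 = S^2 := by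
      rw [← Finset.sum_mul, (stoch_pow M hM0 hM1 k).2 i₀, one_mul]
    have := Finset.sum_lt_sum (fun j' _ => hterm_le j') ⟨j, Finset.mem_univ j, hterm_lt⟩
    rw [hlhs, hrhs] at this
    exact lt_irrefl _ this
  have hμ1 : μ = 1 := by
    have h1 := huj k₀ le_rfl
    have h2 := huj (k₀+1) (Nat.le_succ k₀)
    rw [h1, pow_succ] at h2
    have h3 := mul_right_cancel₀ hui₀ h2
    have hpk : μ^k₀ ≠ 0 := pow_ne_zero _ hμ0
    have h4 : μ^k₀ * 1 = μ^k₀ * μ := by rw [mul_one]; exact h3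
    exact (mul_left_cancel₀ hpk h4).symm
  refine ⟨hμ1, ?_⟩
  suffices hconst : ∀ i, u i = u j by intro i i'; rw [hconst i, hconst i']
  set u' : Fin (m+1) → ℂ := fun i => u i - u j with hu'def
  have hNu' : ∀ i, ∑ j', ((M^k₀) i j' : ℂ) * u' j' = u' i := by
    intro i
    have h1 := congrFun (hpowvec k₀) i
    rw [hμ1, one_pow, one_smul] at h1
    have h1' : ∑ j', ((M^k₀) i j' : ℂ) * u j' = u i := by
      simpa [mulVec, dotProduct, Matrix.map_apply] using h1
    have h2 : ∑ j', ((M^k₀) i j' : ℂ) * u j = u j := by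
      rw [← Finset.sum_mul]
      norm_cast
      rw [(stoch_pow M hM0 hM1 k₀).2 i]
      simp
    calc ∑ j', ((M^k₀) i j' : ℂ) * u' j'
        = ∑ j', (((M^k₀) i j' : ℂ) * u j' - ((M^k₀) i j' : ℂ) * u j) := by
          refine Finset.sum_congr rfl fun j' _ => ?_
          simp only [u']
          ring
      _ = u i - u j := by rw [Finset.sum_sub_distrib, h1', h2]
      _ = u' i := rfl
  by_contra hne
  push_neg at hne
  obtain ⟨i₂, hi₂⟩ := hne
  obtain ⟨i₁, -, hmax'⟩ := Finset.exists_max_image Finset.univ (fun i => ‖u' i‖) ⟨0, by simp⟩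
  simp only [Finset.mem_univ, forall_true_left] at hmax'
  set S' := ‖u' i₁‖ with hS'def
  have hS'0 : 0 < S' := by
    have : u' i₂ ≠ 0 := sub_ne_zero.mpr hi₂
    exact lt_of_lt_of_le (norm_pos_iff.2 this) (hmax' i₂)
  have hu'j : u' j = 0 := by simp [u']
  have hjp := hpos k₀ le_rfl i₁
  have hnn := (stoch_pow M hM0 hM1 k₀).1
  have hcalc : S' < S' := by
    calc S' = ‖∑ j', ((M^k₀) i₁ j' : ℂ) * u' j'‖ := by rw [hNu' i₁]
      _ ≤ ∑ j', ‖((M^k₀) i₁ j' : ℂ) * u' j'‖ := norm_sum_le _ _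
      _ = ∑ j', (M^k₀) i₁ j' * ‖u' j'‖ := by
          refine Finset.sum_congr rfl fun j' _ => ?_
          rw [norm_mul, Complex.norm_real, Real.norm_of_nonneg (hnn i₁ j')]
      _ < ∑ j', (M^k₀) i₁ j' * S' := by
          refine Finset.sum_lt_sum (fun j' _ => ?_) ⟨j, Finset.mem_univ j, ?_⟩
          · exact mul_le_mul_of_nonneg_left (hmax' j') (hnn i₁ j')
          · rw [hu'j, norm_zero, mul_zero]
            exact mul_pos hjp hS'0
      _ = S' := by rw [← Finset.sum_mul, (stoch_pow M hM0 hM1 k₀).2 i₁, one_mul]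
  exact lt_irrefl _ hcalc

lemma assemble (m : ℕ) (M : Matrix (Fin (m+1)) (Fin (m+1)) ℝ)
    (hM0 : ∀ i j, 0 ≤ M i j) (hM1 : ∀ i, ∑ j, M i j = 1)
    (haper : ∃ j, ∃ k₀, ∀ k ≥ k₀, ∀ i, 0 < (M ^ k) i j)
    (Mred : Matrix (Fin m) (Fin m) ℝ) (c : Matrix (Fin 1) (Fin m) ℝ)
    (hblock : pairDiffQ m * M * (pairDiffQ m)⁻¹ =
      Matrix.reindex finSumFinEquiv finSumFinEquiv (Matrix.fromBlocks Mred 0 c 1))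
    (μ : ℂ) (v : Fin m → ℂ) (hv : v ≠ 0)
    (heig : (Mred.map Complex.ofReal) *ᵥ v = μ • v) :
    ‖μ‖ < 1 := by
  have hdet := pairDiffQ_det_ne m
  have hdetU : IsUnit (pairDiffQ m).det := isUnit_iff_ne_zero.2 hdet
  set Q := pairDiffQ m with hQdef
  set QC := Q.map Complex.ofReal with hQCdef
  set NC := M.map Complex.ofReal with hNCdef
  set MredC := Mred.map Complex.ofReal with hMredCdef
  set cC := c.map Complex.ofReal with hcCdef
  have hdetCU : IsUnit QC.det := by
    rw [hQCdef, show Q.map Complex.ofReal = Complex.ofRealHom.mapMatrix Q from rfl,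
      ← RingHom.map_det]
    simpa using hdet
  have hmapmul : ∀ (A B : Matrix (Fin (m+1)) (Fin (m+1)) ℝ),
      (A*B).map Complex.ofReal = A.map Complex.ofReal * B.map Complex.ofReal := fun A B =>
    Matrix.map_mul (f := Complex.ofRealHom)
  have hQinvC : QC⁻¹ = Q⁻¹.map Complex.ofReal := by
    apply Matrix.inv_eq_right_inv
    rw [hQCdef, ← hmapmul, Matrix.mul_nonsing_inv _ hdetU,
      Matrix.map_one _ Complex.ofReal_zero Complex.ofReal_one]
  have hblockC : QC * NC * QC⁻¹ =
      Matrix.reindex finSumFinEquiv finSumFinEquiv (Matrix.fromBlocks MredC 0 cC 1) := by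
    rw [hQinvC, hQCdef, hNCdef, ← hmapmul, ← hmapmul, hblock,
      Matrix.reindex_apply, Matrix.reindex_apply, ← Matrix.submatrix_map,
      Matrix.fromBlocks_map, Matrix.map_zero _ Complex.ofReal_zero,
      Matrix.map_one _ Complex.ofReal_zero Complex.ofReal_one]
  have hsplit : ∀ z, (QC * NC * QC⁻¹) *ᵥ z = QC *ᵥ (NC *ᵥ (QC⁻¹ *ᵥ z)) := by
    intro z; rw [← Matrix.mulVec_mulVec, ← Matrix.mulVec_mulVec]
  have hQCw : ∀ z, QC *ᵥ (QC⁻¹ *ᵥ z) = z := fun z => by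
    rw [Matrix.mulVec_mulVec, Matrix.mul_nonsing_inv _ hdetCU, Matrix.one_mulVec]
  have hQCinj : ∀ a b, QC *ᵥ a = QC *ᵥ b → a = b := by
    intro a b h
    have h2 := congrArg (fun z => QC⁻¹ *ᵥ z) h
    simpa [Matrix.mulVec_mulVec, Matrix.nonsing_inv_mul _ hdetCU, Matrix.one_mulVec] using h2
  have hWcalc : ∀ x : ℂ,
      (QC * NC * QC⁻¹) *ᵥ (fun i => Sum.elim v (fun _ => x) (finSumFinEquiv.symm i))
      = fun i => Sum.elim (MredC *ᵥ v) ((cC *ᵥ v) + fun _ => x) (finSumFinEquiv.symm i) := by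
    intro x
    rw [hblockC, Matrix.reindex_apply, Matrix.submatrix_mulVec_equiv]
    funext i
    simp [Matrix.fromBlocks_mulVec, Function.comp_def]
  have hwne : ∀ (x : ℂ),
      (fun i : Fin (m+1) => Sum.elim v (fun _ : Fin 1 => x) (finSumFinEquiv.symm i)) ≠ 0 := by
    intro x h0
    obtain ⟨i', hv'⟩ := Function.ne_iff.mp hv
    have := congrFun h0 (finSumFinEquiv (Sum.inl i'))
    rw [Equiv.symm_apply_apply] at this
    exact hv' this
  by_cases hμ1 : μ = 1
  · -- μ = 1 : derive a contradiction
    exfalso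
    subst hμ1
    set α := (cC *ᵥ v) 0 with hαdef
    set w : Fin (m+1) → ℂ := fun i => Sum.elim v (fun _ => (0:ℂ)) (finSumFinEquiv.symm i)
      with hwdef
    set u := QC⁻¹ *ᵥ w with hudef
    have hune : u ≠ 0 := by
      intro h0
      have hw0 : w = 0 := by rw [← hQCw w, ← hudef, h0, Matrix.mulVec_zero]
      exact hwne _ hw0
    have honesC : QC *ᵥ (fun _ => (1:ℂ)) = Pi.single (Fin.last m) (1:ℂ) := by
      have h1 := map_mulVec Q (fun _ => (1:ℝ))
      rw [hQdef, pairDiffQ_ones] at h1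
      rw [hQCdef, hQdef]
      rw [show (fun _ : Fin (m+1) => (1:ℂ)) = fun i : Fin (m+1) => ((1:ℝ):ℂ) by norm_num]
      rw [h1]
      funext i
      by_cases h : i = Fin.last m
      · subst h; simp
      · simp [Pi.single_eq_of_ne h]
    have hNCu : NC *ᵥ u = u + α • (fun _ => (1:ℂ)) := by
      apply hQCinj
      have hL : QC *ᵥ (NC *ᵥ u) =
          fun i => Sum.elim v (fun _ => α) (finSumFinEquiv.symm i) := by
        rw [hudef, ← hsplit, hWcalc 0, heig, one_smul]
        funext i
        cases h : finSumFinEquiv.symm i with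
        | inl a => simp
        | inr a =>
          simp only [Sum.elim_inr, Pi.add_apply]
          rw [hαdef, Subsingleton.elim a 0]
          simp
      rw [hL, Matrix.mulVec_add, Matrix.mulVec_smul, hQCw w, honesC]
      funext i
      induction i using Fin.lastCases with
      | last =>
        simp [hwdef, finSumFinEquiv_symm_last, Pi.single_eq_same]
      | cast i =>
        have h1 : finSumFinEquiv.symm (Fin.castSucc i) = Sum.inl i :=
          finSumFinEquiv_symm_apply_castAdd i
        have h2 : Fin.castSucc i ≠ Fin.last m := (Fin.castSucc_lt_last i).ne
        simp [hwdef, h1, Pi.single_eq_of_ne h2]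
    have hNCones : NC *ᵥ (fun _ => (1:ℂ)) = fun _ => (1:ℂ) := by
      have h1 := map_mulVec M (fun _ => (1:ℝ))
      have h2 : M *ᵥ (fun _ => (1:ℝ)) = fun _ => (1:ℝ) := by
        funext i; simp [Matrix.mulVec, dotProduct, hM1 i]
      rw [h2] at h1
      rw [hNCdef]
      rw [show (fun _ : Fin (m+1) => (1:ℂ)) = fun i : Fin (m+1) => ((1:ℝ):ℂ) by norm_num]
      rw [h1]
    have hpow : ∀ k : ℕ, NC^k *ᵥ u = u + ((k:ℂ) * α) • (fun _ => (1:ℂ)) := by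
      intro k
      induction k with
      | zero => simp [Matrix.one_mulVec]
      | succ k ih =>
        rw [pow_succ', ← Matrix.mulVec_mulVec, ih, Matrix.mulVec_add, Matrix.mulVec_smul,
          hNCu, hNCones]
        funext i
        simp only [Pi.add_apply, Pi.smul_apply, smul_eq_mul, mul_one, Nat.cast_succ]
        ring
    obtain ⟨i₀, -, hmx⟩ := Finset.exists_max_image Finset.univ (fun i => ‖u i‖) ⟨0, by simp⟩
    simp only [Finset.mem_univ, forall_true_left] at hmx
    have hb : ∀ k : ℕ, ‖u 0 + (k:ℂ) * α‖ ≤ ‖u i₀‖ := by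
      intro k
      have h1 : ((M^k).map Complex.ofReal) *ᵥ u = u + ((k:ℂ)*α) • (fun _ => (1:ℂ)) := by
        rw [mapC_pow, ← hNCdef, hpow k]
      have h2 := stoch_bound (M^k) (stoch_pow M hM0 hM1 k).1 (stoch_pow M hM0 hM1 k).2
        u ‖u i₀‖ hmx 0
      rw [h1] at h2
      simpa using h2
    have hα0 : α = 0 := by
      by_contra hα
      obtain ⟨k, hk⟩ := exists_nat_gt ((‖u i₀‖ + ‖u 0‖) / ‖α‖)
      have h1 := hb k
      have h2 : (k:ℝ) * ‖α‖ ≤ ‖u i₀‖ + ‖u 0‖ := by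
        have h3 : ‖(k:ℂ)*α‖ ≤ ‖u 0 + (k:ℂ)*α‖ + ‖u 0‖ := by
          calc ‖(k:ℂ)*α‖ = ‖(u 0 + (k:ℂ)*α) - u 0‖ := by ring_nf
            _ ≤ ‖u 0 + (k:ℂ)*α‖ + ‖u 0‖ := norm_sub_le _ _
        rw [norm_mul, Complex.norm_natCast] at h3
        linarith
      have hposα : 0 < ‖α‖ := norm_pos_iff.2 hα
      rw [div_lt_iff₀ hposα] at hk
      linarith
    have hNCu' : NC *ᵥ u = (1:ℂ) • u := by
      rw [hNCu, hα0]
      funext i; simp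
    rcases key m M hM0 hM1 haper 1 u hune hNCu' with h | h
    · simp at h
    · obtain ⟨-, hcst⟩ := h
      have hu0 : u = fun _ => u 0 := funext fun i => hcst i 0
      have hwc : w = (u 0) • (Pi.single (Fin.last m) (1:ℂ) : Fin (m+1) → ℂ) := by
        calc w = QC *ᵥ u := (hQCw w).symm
          _ = QC *ᵥ ((u 0) • fun _ => (1:ℂ)) := by
              rw [show ((u 0) • fun _ : Fin (m+1) => (1:ℂ)) = fun _ => u 0 by
                funext i; simp, ← hu0]
          _ = (u 0) • (Pi.single (Fin.last m) (1:ℂ) : Fin (m+1) → ℂ) := by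
              rw [Matrix.mulVec_smul, honesC]
      obtain ⟨i', hv'⟩ := Function.ne_iff.mp hv
      have h5 := congrFun hwc (finSumFinEquiv (Sum.inl i'))
      rw [hwdef] at h5
      simp only [Equiv.symm_apply_apply, Sum.elim_inl, Pi.smul_apply] at h5
      have h6 : (finSumFinEquiv (Sum.inl i') : Fin (m+1)) ≠ Fin.last m := by
        rw [finSumFinEquiv_apply_left]
        exact (Fin.castSucc_lt_last i').ne
      rw [Pi.single_eq_of_ne h6] at h5
      simp at h5
      exact hv' h5
  · -- μ ≠ 1
    set α := (cC *ᵥ v) 0 with hαdef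
    set x := α / (μ - 1) with hxdef
    have hxeq : α + x = μ * x := by
      have hμ1' : μ - 1 ≠ 0 := sub_ne_zero.mpr hμ1
      have hx' : (μ - 1) * x = α := by rw [hxdef]; field_simp
      linear_combination -hx'
    set w : Fin (m+1) → ℂ := fun i => Sum.elim v (fun _ => x) (finSumFinEquiv.symm i)
      with hwdef
    set u := QC⁻¹ *ᵥ w with hudef
    have hune : u ≠ 0 := by
      intro h0
      have hw0 : w = 0 := by rw [← hQCw w, ← hudef, h0, Matrix.mulVec_zero]
      exact hwne _ hw0
    have h1 : QC *ᵥ (NC *ᵥ u) =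
        fun i => Sum.elim (μ • v) (fun _ => μ * x) (finSumFinEquiv.symm i) := by
      rw [hudef, ← hsplit, hWcalc x, heig]
      funext i
      cases h : finSumFinEquiv.symm i with
      | inl a => simp
      | inr a =>
        simp only [Sum.elim_inr, Pi.add_apply]
        rw [Subsingleton.elim a 0, ← hαdef]
        exact hxeq
    have h2 : QC *ᵥ (μ • u) =
        fun i => Sum.elim (μ • v) (fun _ => μ * x) (finSumFinEquiv.symm i) := by
      rw [Matrix.mulVec_smul, hudef, hQCw w]
      funext i
      cases h : finSumFinEquiv.symm i with
      | inl a => simp [hwdef, h]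
      | inr a => simp [hwdef, h]
    have h3 : NC *ᵥ u = μ • u := hQCinj _ _ (h1.trans h2.symm)
    rcases key m M hM0 hM1 haper μ u hune h3 with h | h
    · exact h
    · exact absurd h.1 hμ1


theorem stmt_16 (m : ℕ) (M : Matrix (Fin (m + 1)) (Fin (m + 1)) ℝ)
    (hM0 : ∀ i j, 0 ≤ M i j) (hM1 : ∀ i, ∑ j, M i j = 1)
    (haper : ∃ j, ∃ k₀, ∀ k ≥ k₀, ∀ i, 0 < (M ^ k) i j) :
    IsUnit (pairDiffQ m) ∧
    ∃ (Mred : Matrix (Fin m) (Fin m) ℝ) (c : Matrix (Fin 1) (Fin m) ℝ),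
      pairDiffQ m * M * (pairDiffQ m)⁻¹ =
        Matrix.reindex finSumFinEquiv finSumFinEquiv (Matrix.fromBlocks Mred 0 c 1) ∧
      ∀ (μ : ℂ) (v : Fin m → ℂ), v ≠ 0 →
        (Mred.map Complex.ofReal).mulVec v = μ • v → ‖μ‖ < 1 := by
  refine ⟨(Matrix.isUnit_iff_isUnit_det _).2 (isUnit_iff_ne_zero.2 (pairDiffQ_det_ne m)), ?_⟩
  refine ⟨(pairDiffQ m * M * (pairDiffQ m)⁻¹).submatrix Fin.castSucc Fin.castSucc,
    Matrix.of (fun _ j => (pairDiffQ m * M * (pairDiffQ m)⁻¹) (Fin.last m) (Fin.castSucc j)),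
    blockform m M hM1, ?_⟩
  intro μ v hv heig
  exact assemble m M hM0 hM1 haper _ _ (blockform m M hM1) μ v hv heig
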